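/- Let p, q be integers with 2 ≤ p ≤ q and gcd(p, q + 1) = 1, and let Δ_{p,q} = conv{(−1, 0), (0, q), (p, −1)} ⊂ ℝ². Then the lattice points in the topological interior of Δ_{p,q} are not all collinear: there is no line in ℝ² containing every lattice point of the interior of Δ_{p,q}. -/

import Mathlib

open MeasureTheory Set
open scoped ENNReal

noncomputable section

/-- A point of `ℝ^d` is a lattice point if all its coordinates are integers. -/
def IsLatticePt (d : ℕ) (x : Fin d → ℝ) : Prop := ∀ i, ∃ z : ℤ, x i = (z : ℝ)

/-- A lattice `d`-simplex: the convex hull of `d+1` affinely independent points of `ℤ^d`. -/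
def IsLatticeSimplex (d : ℕ) (T : Set (Fin d → ℝ)) : Prop :=
  ∃ v : Fin (d + 1) → Fin d → ℤ,
    AffineIndependent ℝ (fun i => fun j => ((v i j : ℤ) : ℝ)) ∧
    T = convexHull ℝ (Set.range (fun i => fun j => ((v i j : ℤ) : ℝ)))

/-- A lattice `d`-polytope: convex hull of a finite set of lattice points affinely
spanning `ℝ^d`. -/
def IsLatticePolytope (d : ℕ) (P : Set (Fin d → ℝ)) : Prop :=
  ∃ F : Finset (Fin d → ℤ),
    affineSpan ℝ ((fun v : Fin d → ℤ => fun j : Fin d => (v j : ℝ)) '' ↑F) = ⊤ ∧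
    P = convexHull ℝ ((fun v : Fin d → ℤ => fun j : Fin d => (v j : ℝ)) '' ↑F)

/-- Clean: the only lattice points on the boundary are the vertices (extreme points). -/
def IsClean (d : ℕ) (P : Set (Fin d → ℝ)) : Prop :=
  frontier P ∩ {x | IsLatticePt d x} = Set.extremePoints ℝ P

/-- Unimodular equivalence of subsets of `ℝ^d`. -/
def UnimodEquiv (d : ℕ) (P Q : Set (Fin d → ℝ)) : Prop :=
  ∃ (M : Matrix (Fin d) (Fin d) ℤ) (u : Fin d → ℤ),
    (M.det = 1 ∨ M.det = -1) ∧
    (fun x => (M.map (fun z : ℤ => (z : ℝ))).mulVec x + (fun i => (u i : ℝ))) '' P = Q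

/-- `S_d(k) = conv(e_1, …, e_d, -k(e_1 + ⋯ + e_d))`. -/
def Sdk (d k : ℕ) : Set (Fin d → ℝ) :=
  convexHull ℝ
    ((Set.range fun i : Fin d => (Pi.single i 1 : Fin d → ℝ)) ∪ {fun _ => -(k : ℝ)})

/-- `T_{a_1,…,a_d}`: vertex set `{0, e_1, …, e_{d-1}, (a_1,…,a_d)}`. -/
def Ta (d : ℕ) (a : Fin d → ℤ) : Set (Fin d → ℝ) :=
  convexHull ℝ
    ({(0 : Fin d → ℝ)} ∪
      {x | ∃ i : Fin d, i.val < d - 1 ∧ x = (Pi.single i 1 : Fin d → ℝ)} ∪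
      {fun i => (a i : ℝ)})

/-- Three points of the plane with nonzero "cross product" of difference vectors
are not collinear. -/
lemma not_collinear_of_det (a b c : Fin 2 → ℝ)
    (hdet : (b 0 - a 0) * (c 1 - a 1) - (b 1 - a 1) * (c 0 - a 0) ≠ 0) :
    ¬ Collinear ℝ ({a, b, c} : Set (Fin 2 → ℝ)) := by
  intro hcol
  obtain ⟨v, hv⟩ := (collinear_iff_of_mem (Set.mem_insert a _)).mp hcol
  obtain ⟨r, hr⟩ := hv b (by simp)
  obtain ⟨s, hs⟩ := hv c (by simp)
  apply hdet
  have hb0 : b 0 = r * v 0 + a 0 := by rw [hr]; simp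
  have hb1 : b 1 = r * v 1 + a 1 := by rw [hr]; simp
  have hc0 : c 0 = s * v 0 + a 0 := by rw [hs]; simp
  have hc1 : c 1 = s * v 1 + a 1 := by rw [hs]; simp
  rw [hb0, hb1, hc0, hc1]; ring

/-- For integers `2 ≤ p ≤ q` with `gcd(p, q+1) = 1`, the interior lattice
points of the triangle `Δ_{p,q} = conv{(-1,0), (0,q), (p,-1)}` are not all collinear. -/
theorem interior_points_not_collinear (p q : ℤ) (hp : 2 ≤ p) (hpq : p ≤ q)
    (h : Int.gcd p (q + 1) = 1) :
    ¬ Collinear ℝ {x ∈ interior (convexHull ℝ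
        {![(-1 : ℝ), 0], ![0, (q : ℝ)], ![(p : ℝ), -1]}) | IsLatticePt 2 x} := by
  intro hcol
  have hp2 : (2:ℝ) ≤ (p:ℝ) := by exact_mod_cast hp
  have hq2 : (2:ℝ) ≤ (q:ℝ) := by exact_mod_cast hp.trans hpq
  set A : Fin 2 → ℝ := ![(-1 : ℝ), 0] with hA
  set B : Fin 2 → ℝ := ![0, (q : ℝ)] with hB
  set C : Fin 2 → ℝ := ![(p : ℝ), -1] with hC
  set D : ℝ := (p:ℝ) * q + q + 1 with hDdef
  have hD : 0 < D := by nlinarith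
  have hind : AffineIndependent ℝ ![A, B, C] := by
    rw [affineIndependent_iff_not_collinear_set]
    apply not_collinear_of_det
    simp only [hA, hB, hC, Matrix.cons_val_zero, Matrix.cons_val_one, Matrix.head_cons]
    intro heq; nlinarith
  have htot : affineSpan ℝ (Set.range ![A, B, C]) = ⊤ :=
    hind.affineSpan_eq_top_iff_card_eq_finrank_add_one.mpr (by simp)
  let b : AffineBasis (Fin 3) ℝ (Fin 2 → ℝ) := ⟨![A, B, C], hind, htot⟩
  have hb : ⇑b = ![A, B, C] := rfl
  have hrange : Set.range ⇑b = ({A, B, C} : Set (Fin 2 → ℝ)) := by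
    rw [hb]
    simp_rw [Matrix.range_cons, Matrix.range_empty, Set.singleton_union, insert_empty_eq]
  have hint : interior (convexHull ℝ ({A, B, C} : Set (Fin 2 → ℝ)))
      = {x | ∀ i, 0 < b.coord i x} := by
    rw [← hrange, b.interior_convexHull]
  -- helper: membership in the interior from positive barycentric weights
  have key : ∀ (x : Fin 2 → ℝ) (w : Fin 3 → ℝ), (∑ i, w i) = 1 → (∀ i, 0 < w i) →
      x = w 0 • A + w 1 • B + w 2 • C →
      x ∈ interior (convexHull ℝ ({A, B, C} : Set (Fin 2 → ℝ))) := by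
    intro x w hw hwpos hx
    rw [hint]
    have hxc : x = Finset.univ.affineCombination ℝ (⇑b) w := by
      rw [Finset.affineCombination_eq_linear_combination _ _ _ hw, Fin.sum_univ_three, hb]
      simpa using hx
    intro i
    rw [hxc, b.coord_apply_combination_of_mem (Finset.mem_univ i) hw]
    exact hwpos i
  -- the three interior lattice points (0,0), (1,0), (0,1)
  have h0 : (![0, 0] : Fin 2 → ℝ) ∈ interior (convexHull ℝ ({A, B, C} : Set (Fin 2 → ℝ))) := by
    apply key _ ![(p:ℝ)*q/D, 1/D, (q:ℝ)/D]
    · simp only [Fin.sum_univ_three, Matrix.cons_val_zero, Matrix.cons_val_one,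
        Matrix.head_cons, Matrix.cons_val_two, Matrix.tail_cons]
      field_simp
      try ring
    · intro i; fin_cases i
      · simpa using div_pos (by nlinarith) hD
      · simpa using div_pos one_pos hD
      · simpa using div_pos (by nlinarith) hD
    · funext j; fin_cases j <;> simp [hA, hB, hC] <;> field_simp <;> ring
  have h1 : (![1, 0] : Fin 2 → ℝ) ∈ interior (convexHull ℝ ({A, B, C} : Set (Fin 2 → ℝ))) := by
    apply key _ ![((p:ℝ)*q - q - 1)/D, 2/D, 2*(q:ℝ)/D]
    · simp only [Fin.sum_univ_three, Matrix.cons_val_zero, Matrix.cons_val_one,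
        Matrix.head_cons, Matrix.cons_val_two, Matrix.tail_cons]
      field_simp
      try ring
    · intro i; fin_cases i
      · simpa using div_pos (by nlinarith) hD
      · simpa using div_pos two_pos hD
      · simpa using div_pos (by nlinarith) hD
    · funext j; fin_cases j <;> simp [hA, hB, hC] <;> field_simp <;> ring
  have h2 : (![0, 1] : Fin 2 → ℝ) ∈ interior (convexHull ℝ ({A, B, C} : Set (Fin 2 → ℝ))) := by
    apply key _ ![(p:ℝ)*((q:ℝ)-1)/D, ((p:ℝ)+2)/D, ((q:ℝ)-1)/D]
    · simp only [Fin.sum_univ_three, Matrix.cons_val_zero, Matrix.cons_val_one,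
        Matrix.head_cons, Matrix.cons_val_two, Matrix.tail_cons]
      field_simp
      try ring
    · intro i; fin_cases i
      · simpa using div_pos (by nlinarith) hD
      · simpa using div_pos (by nlinarith) hD
      · simpa using div_pos (by nlinarith) hD
    · funext j; fin_cases j <;> simp [hA, hB, hC] <;> field_simp <;> ring
  -- they are lattice points
  have hl : ∀ (m n : ℤ), IsLatticePt 2 (![(m:ℝ), (n:ℝ)] : Fin 2 → ℝ) := by
    intro m n i; fin_cases i
    · exact ⟨m, by simp⟩
    · exact ⟨n, by simp⟩
  -- so all three lie in the set, which is collinear: contradiction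
  have hsub : ({![0,0], ![1,0], ![0,1]} : Set (Fin 2 → ℝ)) ⊆
      {x ∈ interior (convexHull ℝ ({A, B, C} : Set (Fin 2 → ℝ))) | IsLatticePt 2 x} := by
    rintro x (rfl | rfl | rfl)
    · exact ⟨h0, by simpa using hl 0 0⟩
    · exact ⟨h1, by simpa using hl 1 0⟩
    · exact ⟨h2, by simpa using hl 0 1⟩
  refine not_collinear_of_det ![0,0] ![1,0] ![0,1] (by norm_num) (hcol.subset hsub)
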